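/- Let U, V be finite-dimensional vector spaces over a field F, V_0 a linear subspace of V, and S a linear subspace of Hom(U,V). Let S^⊥ = {v ∈ Hom(V,U) : tr(v∘u) = 0 for all u ∈ S}. Then dim(S ∩ Hom(U,V_0)) + dim{v restricted to V_0 : v ∈ S^⊥} = (dim U)(dim V_0), where Hom(U,V_0) is identified with the subspace of Hom(U,V) of maps with range in V_0. -/

import Mathlib

variable {F U V : Type*} [Field F] [AddCommGroup U] [Module F U]
  [AddCommGroup V] [Module F V]

/-- The subspace of Hom(U,V) of maps with range contained in V₀. -/
def homInto (F : Type*) [Field F] {U V : Type*} [AddCommGroup U] [Module F U]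
    [AddCommGroup V] [Module F V] (V0 : Submodule F V) : Submodule F (U →ₗ[F] V) where
  carrier := {u | ∀ x : U, u x ∈ V0}
  add_mem' := fun ha hb x => by simp only [LinearMap.add_apply]; exact V0.add_mem (ha x) (hb x)
  zero_mem' := fun x => by simp only [LinearMap.zero_apply]; exact V0.zero_mem
  smul_mem' := fun c u hu x => by simp only [LinearMap.smul_apply]; exact V0.smul_mem c (hu x)

/-- The trace-orthogonal space S^⊥ ⊆ Hom(V,U) of a subspace S ⊆ Hom(U,V). -/
def traceOrtho (F : Type*) [Field F] {U V : Type*} [AddCommGroup U] [Module F U]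
    [AddCommGroup V] [Module F V] (S : Submodule F (U →ₗ[F] V)) :
    Submodule F (V →ₗ[F] U) where
  carrier := {v | ∀ u ∈ S, LinearMap.trace F U (v ∘ₗ u) = 0}
  add_mem' := by
    intro a b ha hb u hu
    rw [LinearMap.add_comp, map_add, ha u hu, hb u hu, add_zero]
  zero_mem' := by
    intro u hu
    rw [LinearMap.zero_comp, map_zero]
  smul_mem' := by
    intro c v hv u hu
    rw [LinearMap.smul_comp, map_smul, hv u hu, smul_zero]

open Module LinearMap

/-- Trace of `v ∘ (rank-one map φ ⊗ w)` is `φ (v w)`. -/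
lemma trace_comp_dualTensorHom [FiniteDimensional F U] [FiniteDimensional F V]
    (v : V →ₗ[F] U) (φ : Module.Dual F U) (w : V) :
    LinearMap.trace F U (v ∘ₗ dualTensorHom F U V (φ ⊗ₜ[F] w)) = φ (v w) := by
  have h : v ∘ₗ dualTensorHom F U V (φ ⊗ₜ[F] w) = dualTensorHom F U U (φ ⊗ₜ[F] v w) := by
    ext x
    simp [dualTensorHom_apply]
  rw [h, trace_eq_contract_apply, contractLeft_apply]

/-- The trace pairing as a map to the dual. -/
noncomputable def tracePairing (F : Type*) [Field F] (U V : Type*) [AddCommGroup U] [Module F U]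
    [AddCommGroup V] [Module F V] :
    (V →ₗ[F] U) →ₗ[F] Module.Dual F (U →ₗ[F] V) :=
  (LinearMap.llcomp F U V U).compr₂ (LinearMap.trace F U)

lemma tracePairing_apply (v : V →ₗ[F] U) (u : U →ₗ[F] V) :
    tracePairing F U V v u = LinearMap.trace F U (v ∘ₗ u) := rfl

lemma tracePairing_injective [FiniteDimensional F U] [FiniteDimensional F V] :
    Function.Injective (tracePairing F U V) := by
  rw [← LinearMap.ker_eq_bot, eq_bot_iff]
  intro v hv
  simp only [LinearMap.mem_ker] at hv
  have hv' : ∀ u : U →ₗ[F] V, LinearMap.trace F U (v ∘ₗ u) = 0 := by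
    intro u
    have := congrArg (fun f => f u) hv
    simpa [tracePairing_apply] using this
  have : v = 0 := by
    ext w
    rw [LinearMap.zero_apply, ← Module.forall_dual_apply_eq_zero_iff (R := F)]
    intro φ
    rw [← trace_comp_dualTensorHom v φ w]
    exact hv' _
  simp [this]

noncomputable def tracePairingEquiv (F : Type*) [Field F] (U V : Type*) [AddCommGroup U]
    [Module F U] [AddCommGroup V] [Module F V] [FiniteDimensional F U] [FiniteDimensional F V] :
    (V →ₗ[F] U) ≃ₗ[F] Module.Dual F (U →ₗ[F] V) :=
  LinearEquiv.ofBijective (tracePairing F U V)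
    ⟨tracePairing_injective, by
      have h : finrank F (V →ₗ[F] U) = finrank F (Module.Dual F (U →ₗ[F] V)) := by
        rw [Module.finrank_linearMap, Subspace.dual_finrank_eq, Module.finrank_linearMap,
          mul_comm]
      exact (LinearMap.injective_iff_surjective_of_finrank_eq_finrank h).mp
        tracePairing_injective⟩

lemma traceOrtho_eq_comap [FiniteDimensional F U] [FiniteDimensional F V]
    (S : Submodule F (U →ₗ[F] V)) :
    traceOrtho F S = S.dualAnnihilator.comap (tracePairing F U V) := by
  ext v
  simp only [Submodule.mem_comap, Submodule.mem_dualAnnihilator]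
  rfl

/-- dim S^⊥ + dim S = dim U · dim V. -/
lemma finrank_traceOrtho_add [FiniteDimensional F U] [FiniteDimensional F V]
    (S : Submodule F (U →ₗ[F] V)) :
    finrank F (traceOrtho F S) + finrank F S = finrank F U * finrank F V := by
  have h1 : finrank F (traceOrtho F S) = finrank F S.dualAnnihilator := by
    rw [traceOrtho_eq_comap]
    have : S.dualAnnihilator.comap (tracePairing F U V)
        = S.dualAnnihilator.comap (tracePairingEquiv F U V : (V →ₗ[F] U) →ₗ[F] _) := rfl
    rw [this, Submodule.comap_equiv_eq_map_symm]
    exact LinearEquiv.finrank_map_eq _ _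
  have h2 : finrank F S.dualAnnihilator = finrank F ((U →ₗ[F] V) ⧸ S) :=
    (LinearEquiv.finrank_eq (Subspace.quotEquivAnnihilator S)).symm
  rw [h1, h2, Submodule.finrank_quotient_add_finrank, Module.finrank_linearMap]

lemma mem_homInto_dualTensorHom (V0 : Submodule F V) (φ : Module.Dual F U) (w : V)
    (hw : w ∈ V0) : dualTensorHom F U V (φ ⊗ₜ[F] w) ∈ homInto F V0 := by
  intro x
  rw [dualTensorHom_apply]
  exact V0.smul_mem _ hw

lemma traceOrtho_inf_ker [FiniteDimensional F U] [FiniteDimensional F V]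
    (V0 : Submodule F V) (S : Submodule F (U →ₗ[F] V)) :
    traceOrtho F S ⊓ LinearMap.ker (LinearMap.lcomp F U V0.subtype)
      = traceOrtho F (S ⊔ homInto F V0) := by
  ext v
  constructor
  · rintro ⟨hvS, hvk⟩ u hu
    rw [Submodule.mem_sup] at hu
    obtain ⟨a, ha, b, hb, rfl⟩ := hu
    have hvb : v ∘ₗ b = 0 := by
      ext x
      have hx : v (b x) = 0 := by
        have := congrArg (fun f => f (⟨b x, hb x⟩ : V0)) (LinearMap.mem_ker.mp hvk)
        simpa using this
      simp [hx]
    rw [comp_add, map_add, hvS a ha, hvb, map_zero, add_zero]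
  · intro hv
    refine ⟨fun u hu => hv u (Submodule.mem_sup_left hu), ?_⟩
    show v ∈ LinearMap.ker (LinearMap.lcomp F U V0.subtype)
    rw [LinearMap.mem_ker]
    ext w
    simp only [LinearMap.lcomp_apply, LinearMap.comp_apply, Submodule.coe_subtype,
      LinearMap.zero_apply]
    rw [← Module.forall_dual_apply_eq_zero_iff (R := F)]
    intro φ
    rw [← trace_comp_dualTensorHom v φ (w : V)]
    exact hv _ (Submodule.mem_sup_right (mem_homInto_dualTensorHom V0 φ w w.2))

/-- homInto is isomorphic to Hom(U, V₀). -/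
noncomputable def homIntoEquiv (V0 : Submodule F V) :
    (U →ₗ[F] ↥V0) ≃ₗ[F] ↥(homInto F (U := U) V0) where
  toFun u := ⟨V0.subtype ∘ₗ u, fun x => (u x).2⟩
  map_add' a b := by ext x; simp
  map_smul' c a := by ext x; simp
  invFun w := LinearMap.codRestrict V0 w.1 w.2
  left_inv u := by ext x; simp; rfl
  right_inv w := by ext x; simp; rfl

lemma finrank_homInto [FiniteDimensional F U] [FiniteDimensional F V] (V0 : Submodule F V) :
    finrank F ↥(homInto F (U := U) V0) = finrank F U * finrank F V0 := by
  rw [← LinearEquiv.finrank_eq (homIntoEquiv (U := U) V0), Module.finrank_linearMap]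

/-- First Trace Orthogonality Lemma:
dim(S ∩ Hom(U,V₀)) + dim{v|_{V₀} : v ∈ S^⊥} = (dim U)(dim V₀). -/
theorem stmt10 [FiniteDimensional F U] [FiniteDimensional F V]
    (V0 : Submodule F V) (S : Submodule F (U →ₗ[F] V)) :
    Module.finrank F ↥(S ⊓ homInto F V0) +
      Module.finrank F ↥((traceOrtho F S).map (LinearMap.lcomp F U V0.subtype)) =
    Module.finrank F U * Module.finrank F V0 := by
  set r := LinearMap.lcomp F U V0.subtype with hr
  set T := traceOrtho F S with hT
  set S' := S ⊔ homInto F V0 with hS'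
  -- rank-nullity for r restricted to T
  have hrn : finrank F (T.map r) + finrank F ↥(T ⊓ LinearMap.ker r) = finrank F T := by
    have h1 : LinearMap.range (r ∘ₗ T.subtype) = T.map r := by
      rw [LinearMap.range_comp, Submodule.range_subtype]
    have h2 : LinearMap.ker (r ∘ₗ T.subtype) = (LinearMap.ker r).comap T.subtype :=
      LinearMap.ker_comp _ _
    have h3 : finrank F ((LinearMap.ker r).comap T.subtype)
        = finrank F ↥(T ⊓ LinearMap.ker r) := by
      have hle : T ⊓ LinearMap.ker r ≤ T := inf_le_left
      have he : (LinearMap.ker r).comap T.subtype = (T ⊓ LinearMap.ker r).comap T.subtype := by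
        ext x
        simp [Submodule.mem_comap, x.2]
      rw [he]
      exact LinearEquiv.finrank_eq (Submodule.comapSubtypeEquivOfLe hle)
    have := LinearMap.finrank_range_add_finrank_ker (r ∘ₗ T.subtype)
    rw [h1, h2, h3] at this
    exact this
  have hinf : T ⊓ LinearMap.ker r = traceOrtho F S' := traceOrtho_inf_ker V0 S
  have hA : finrank F T + finrank F S = finrank F U * finrank F V :=
    finrank_traceOrtho_add S
  have hA' : finrank F (traceOrtho F S') + finrank F S' = finrank F U * finrank F V :=
    finrank_traceOrtho_add S'
  have hsup : finrank F S' + finrank F ↥(S ⊓ homInto F V0)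
      = finrank F S + finrank F (homInto F V0) :=
    Submodule.finrank_sup_add_finrank_inf_eq S (homInto F V0)
  have hhi : finrank F (homInto F V0) = finrank F U * finrank F V0 := finrank_homInto V0
  rw [hinf] at hrn
  omega
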